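/- arXiv:1912.11255 — 4 statements merged into one kernel-verified Lean document; each statement's English description precedes it below -/
import Mathlib

section
/- Let K : [0,∞) → ℝ be continuous with K ≤ 0, and let m : [0,∞) → ℝ be a C² solution of m'' + K·m = 0 with m(0)=0, m'(0)=1, m > 0 on (0,∞). If ∫₀^∞ t·(-K(t)) dt < ∞, then the limit lim_{t→∞} m'(t) exists and is finite. -/
open Set Filter Real MeasureTheory

/-- If moreover `∫₀^∞ t·(-K t) dt < ∞`, then `lim_{t→∞} m'(t)` exists
and is finite. -/
theorem stmt_1 (K m m' m'' : ℝ → ℝ)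
    (hK : ContinuousOn K (Ici 0)) (hKle : ∀ t ∈ Ici (0:ℝ), K t ≤ 0)
    (hm : ∀ t ∈ Ici (0:ℝ), HasDerivWithinAt m (m' t) (Ici 0) t)
    (hm' : ∀ t ∈ Ici (0:ℝ), HasDerivWithinAt m' (m'' t) (Ici 0) t)
    (hm''cont : ContinuousOn m'' (Ici 0))
    (hode : ∀ t ∈ Ici (0:ℝ), m'' t + K t * m t = 0)
    (hm0 : m 0 = 0) (hm'0 : m' 0 = 1)
    (hmpos : ∀ t > (0:ℝ), 0 < m t)
    (hint : IntegrableOn (fun t => t * (-K t)) (Ioi 0)) :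
    ∃ L : ℝ, Tendsto m' atTop (nhds L) := by
  set φ : ℝ → ℝ := fun t => t * (-K t) with hφdef
  -- basic facts
  have hmnn : ∀ t ∈ Ici (0:ℝ), 0 ≤ m t := by
    intro t ht
    rcases eq_or_lt_of_le (mem_Ici.mp ht) with h | h
    · simp [← h, hm0]
    · exact (hmpos t h).le
  have hm''eq : ∀ t ∈ Ici (0:ℝ), m'' t = -K t * m t := by
    intro t ht; have := hode t ht; linarith
  have hm''nn : ∀ t ∈ Ici (0:ℝ), 0 ≤ m'' t := by
    intro t ht
    rw [hm''eq t ht]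
    exact mul_nonneg (neg_nonneg.2 (hKle t ht)) (hmnn t ht)
  -- m' is monotone on Ici 0
  have hm'cont : ContinuousOn m' (Ici 0) := fun t ht => (hm' t ht).continuousWithinAt
  have hmcont : ContinuousOn m (Ici 0) := fun t ht => (hm t ht).continuousWithinAt
  have hderivAt : ∀ x ∈ Ioi (0:ℝ), HasDerivAt m' (m'' x) x := by
    intro x hx
    exact (hm' x (mem_Ici.mpr (le_of_lt hx))).hasDerivAt (Ici_mem_nhds hx)
  have hmderivAt : ∀ x ∈ Ioi (0:ℝ), HasDerivAt m (m' x) x := by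
    intro x hx
    exact (hm x (mem_Ici.mpr (le_of_lt hx))).hasDerivAt (Ici_mem_nhds hx)
  have hm'mono : MonotoneOn m' (Ici 0) := by
    apply monotoneOn_of_deriv_nonneg (convex_Ici 0) hm'cont
    · intro x hx
      rw [interior_Ici] at hx
      exact ((hderivAt x hx).differentiableAt).differentiableWithinAt
    · intro x hx
      rw [interior_Ici] at hx
      rw [(hderivAt x hx).deriv]
      exact hm''nn x (mem_Ici.mpr (le_of_lt hx))
  have hm'one : ∀ t ∈ Ici (0:ℝ), 1 ≤ m' t := by
    intro t ht
    have := hm'mono (le_refl (0:ℝ)) ht ht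
    rwa [hm'0] at this
  have hm'pos : ∀ t ∈ Ici (0:ℝ), 0 < m' t := fun t ht =>
    lt_of_lt_of_le one_pos (hm'one t ht)
  -- m t ≤ t * m' t
  have hkey : ∀ t ∈ Ici (0:ℝ), m t ≤ t * m' t := by
    intro t ht
    have hmono : MonotoneOn (fun t => t * m' t - m t) (Ici 0) := by
      apply monotoneOn_of_deriv_nonneg (convex_Ici 0)
      · exact ((continuousOn_id.mul hm'cont).sub hmcont)
      · intro x hx
        rw [interior_Ici] at hx
        exact (((hasDerivAt_id x).mul (hderivAt x hx)).sub
          (hmderivAt x hx)).differentiableAt.differentiableWithinAt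
      · intro x hx
        rw [interior_Ici] at hx
        have h1 : HasDerivAt (fun t => t * m' t - m t)
            (1 * m' x + x * m'' x - m' x) x :=
          ((hasDerivAt_id x).mul (hderivAt x hx)).sub (hmderivAt x hx)
        rw [h1.deriv]
        have := hm''nn x (mem_Ici.mpr (le_of_lt hx))
        nlinarith [le_of_lt (mem_Ioi.mp hx)]
    have := hmono (le_refl (0:ℝ)) ht ht
    simp only [hm0, zero_mul, sub_zero] at this
    linarith
  -- continuity of φ on Ici 0
  have hφcont : ContinuousOn φ (Ici 0) :=
    continuousOn_id.mul hK.neg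
  have hφnn : ∀ t ∈ Ici (0:ℝ), 0 ≤ φ t := fun t ht =>
    mul_nonneg ht (neg_nonneg.2 (hKle t ht))
  -- interval integrability of φ
  have hφint : ∀ b : ℝ, 0 ≤ b → IntervalIntegrable φ volume 0 b := by
    intro b hb
    apply ContinuousOn.intervalIntegrable
    apply hφcont.mono
    rw [uIcc_of_le hb]
    exact Icc_subset_Ici_self
  set C := ∫ t in Ioi (0:ℝ), φ t with hC
  -- ∫ 0..b φ ≤ C
  have hIle : ∀ b : ℝ, 0 ≤ b → (∫ t in (0:ℝ)..b, φ t) ≤ C := by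
    intro b hb
    rw [intervalIntegral.integral_of_le hb]
    apply setIntegral_mono_set hint
    · filter_upwards [ae_restrict_mem measurableSet_Ioi] with t ht
      exact hφnn t (mem_Ici.mpr (le_of_lt ht))
    · exact HasSubset.Subset.eventuallyLE Ioc_subset_Ioi_self
  -- log (m' b) ≤ ∫ 0..b φ ≤ C, so m' b ≤ exp C
  have hbound : ∀ b ∈ Ici (0:ℝ), m' b ≤ Real.exp C := by
    intro b hb
    have hlog : Real.log (m' b) ≤ ∫ t in (0:ℝ)..b, φ t := by
      set F : ℝ → ℝ := fun t => (∫ s in (0:ℝ)..t, φ s) - Real.log (m' t) with hF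
      have hFmono : MonotoneOn F (Ici 0) := by
        apply monotoneOn_of_deriv_nonneg (convex_Ici 0)
        · apply ContinuousOn.sub
          · intro x hx
            have hcc : ContinuousOn (fun t => ∫ s in (0:ℝ)..t, φ s) (Icc 0 (x+1)) := by
              have := intervalIntegral.continuousOn_primitive_interval
                (μ := volume) (f := φ) (a := (0:ℝ)) (b := x+1) ?_
              · rwa [uIcc_of_le (by linarith [hx.out] : (0:ℝ) ≤ x+1)] at this
              · rw [uIcc_of_le (by linarith [hx.out] : (0:ℝ) ≤ x+1)]
                exact (hφcont.mono Icc_subset_Ici_self).integrableOn_compact isCompact_Icc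
            have hmem : Icc (0:ℝ) (x+1) ∈ nhdsWithin x (Ici 0) :=
              mem_nhdsWithin.2 ⟨Iio (x+1), isOpen_Iio, lt_add_one x,
                fun y hy => ⟨hy.2, le_of_lt hy.1⟩⟩
            exact (hcc x ⟨hx.out, by linarith [hx.out]⟩).mono_of_mem_nhdsWithin hmem
          · exact Real.continuousOn_log.comp hm'cont
              (fun t ht => ne_of_gt (hm'pos t ht))
        · intro x hx
          rw [interior_Ici] at hx
          have hprim : HasDerivAt (fun t => ∫ s in (0:ℝ)..t, φ s) (φ x) x := by
            apply intervalIntegral.integral_hasDerivAt_right (hφint x (le_of_lt hx))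
            · exact ContinuousOn.stronglyMeasurableAtFilter isOpen_Ioi
                (hφcont.mono Ioi_subset_Ici_self) x hx
            · exact (hφcont x (mem_Ici.mpr (le_of_lt hx))).continuousAt (Ici_mem_nhds hx)
          have hlogd : HasDerivAt (fun t => Real.log (m' t)) (m'' x / m' x) x :=
            (hderivAt x hx).log (ne_of_gt (hm'pos x (mem_Ici.mpr (le_of_lt hx))))
          exact (hprim.sub hlogd).differentiableAt.differentiableWithinAt
        · intro x hx
          rw [interior_Ici] at hx
          have hx0 : (0:ℝ) ≤ x := le_of_lt hx
          have hprim : HasDerivAt (fun t => ∫ s in (0:ℝ)..t, φ s) (φ x) x := by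
            apply intervalIntegral.integral_hasDerivAt_right (hφint x hx0)
            · exact ContinuousOn.stronglyMeasurableAtFilter isOpen_Ioi
                (hφcont.mono Ioi_subset_Ici_self) x hx
            · exact (hφcont x hx0).continuousAt (Ici_mem_nhds hx)
          have hlogd : HasDerivAt (fun t => Real.log (m' t)) (m'' x / m' x) x :=
            (hderivAt x hx).log (ne_of_gt (hm'pos x hx0))
          rw [show deriv F x = φ x - m'' x / m' x from (hprim.sub hlogd).deriv]
          rw [sub_nonneg, div_le_iff₀ (hm'pos x hx0)]
          rw [hm''eq x hx0]
          have h1 : m x ≤ x * m' x := hkey x hx0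
          have h2 : 0 ≤ -K x := neg_nonneg.2 (hKle x hx0)
          calc -K x * m x ≤ -K x * (x * m' x) := by nlinarith
            _ = φ x * m' x := by ring
      have := hFmono (le_refl (0:ℝ)) hb hb
      simp only [hF, intervalIntegral.integral_same, hm'0, Real.log_one, sub_zero,
        zero_sub, neg_nonpos] at this
      linarith [this]
    calc m' b = Real.exp (Real.log (m' b)) :=
          (Real.exp_log (hm'pos b hb)).symm
      _ ≤ Real.exp C := Real.exp_le_exp.2 (le_trans hlog (hIle b hb))
  -- conclude via monotone convergence
  set g : ℝ → ℝ := fun t => m' (max t 0) with hg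
  have hgmono : Monotone g := by
    intro s t hst
    exact hm'mono (le_max_right s 0) (le_max_right t 0)
      (max_le_max hst (le_refl 0))
  have hgbdd : BddAbove (range g) := by
    refine ⟨Real.exp C, ?_⟩
    rintro y ⟨t, rfl⟩
    exact hbound _ (le_max_right t 0)
  refine ⟨⨆ t, g t, ?_⟩
  have : Tendsto g atTop (nhds (⨆ t, g t)) := tendsto_atTop_ciSup hgmono hgbdd
  apply this.congr'
  filter_upwards [eventually_ge_atTop (0:ℝ)] with t ht
  simp [hg, max_eq_left ht]
end

section
/- Let K : [0,∞) → ℝ be continuous with K ≤ 0 and ∫₀^∞ t·(−K(t)) dt < ∞, and let m be the solution of m'' + K·m = 0, m(0)=0, m'(0)=1. Then lim_{t→∞} m'(t) = 1 + ∫₀^∞ (−K(s))·m(s) ds, and this value is ≥ 1. -/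
open Set Filter Real MeasureTheory

/-- With `K ≤ 0` continuous and `∫₀^∞ t(−K t) dt < ∞`, the solution of
`m'' + K m = 0`, `m 0 = 0`, `m' 0 = 1` satisfies
`lim m' = 1 + ∫₀^∞ (−K s) m s ds ≥ 1`. -/
theorem stmt_11 (K m m' m'' : ℝ → ℝ)
    (hK : ContinuousOn K (Ici 0)) (hKle : ∀ t ∈ Ici (0:ℝ), K t ≤ 0)
    (hint : IntegrableOn (fun t => t * (-K t)) (Ioi 0))
    (hm : ∀ t ∈ Ici (0:ℝ), HasDerivWithinAt m (m' t) (Ici 0) t)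
    (hm' : ∀ t ∈ Ici (0:ℝ), HasDerivWithinAt m' (m'' t) (Ici 0) t)
    (hm''cont : ContinuousOn m'' (Ici 0))
    (hode : ∀ t ∈ Ici (0:ℝ), m'' t + K t * m t = 0)
    (hm0 : m 0 = 0) (hm'0 : m' 0 = 1) :
    Tendsto m' atTop (nhds (1 + ∫ s in Ioi 0, (-K s) * m s)) ∧
      1 ≤ 1 + ∫ s in Ioi 0, (-K s) * m s := by
  have hmc : ContinuousOn m (Ici 0) := fun t ht => (hm t ht).continuousWithinAt
  have hm'c : ContinuousOn m' (Ici 0) := fun t ht => (hm' t ht).continuousWithinAt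
  have hKn : ∀ t ∈ Ici (0:ℝ), 0 ≤ -K t := fun t ht => neg_nonneg.2 (hKle t ht)
  have hodef : ∀ t ∈ Ici (0:ℝ), m'' t = (-K t) * m t := by
    intro t ht
    have h := hode t ht
    linarith [h]
  -- FTC for m
  have Hm : ∀ t, 0 ≤ t → (∫ y in (0:ℝ)..t, m' y) = m t := by
    intro t ht
    have h := intervalIntegral.integral_eq_sub_of_hasDeriv_right_of_le ht
      (hmc.mono Icc_subset_Ici_self)
      (fun x hx => (hm x hx.1.le).mono
        (Ioi_subset_Ici_self.trans (Ici_subset_Ici.2 hx.1.le)))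
      ((hm'c.mono (by rw [uIcc_of_le ht]; exact Icc_subset_Ici_self)).intervalIntegrable)
    rw [h, hm0, sub_zero]
  -- FTC for m'
  have Hm' : ∀ t, 0 ≤ t → (∫ y in (0:ℝ)..t, m'' y) = m' t - 1 := by
    intro t ht
    have h := intervalIntegral.integral_eq_sub_of_hasDeriv_right_of_le ht
      (hm'c.mono Icc_subset_Ici_self)
      (fun x hx => (hm' x hx.1.le).mono
        (Ioi_subset_Ici_self.trans (Ici_subset_Ici.2 hx.1.le)))
      ((hm''cont.mono (by rw [uIcc_of_le ht]; exact Icc_subset_Ici_self)).intervalIntegrable)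
    rw [h, hm'0]
  -- key: if m' > 0 on [0,b) then m' b ≥ 1
  have key : ∀ b, 0 ≤ b → (∀ s ∈ Ico (0:ℝ) b, 0 < m' s) → 1 ≤ m' b := by
    intro b hb hpos'
    have hmnn : ∀ s ∈ Ico (0:ℝ) b, 0 ≤ m s := by
      intro s hs
      have h1 : 0 ≤ ∫ u in (0:ℝ)..s, m' u :=
        intervalIntegral.integral_nonneg hs.1
          (fun u hu => (hpos' u ⟨hu.1, lt_of_le_of_lt hu.2 hs.2⟩).le)
      rw [Hm s hs.1] at h1
      exact h1
    have h0 : 0 ≤ ∫ y in (0:ℝ)..b, m'' y := by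
      rw [intervalIntegral.integral_of_le hb, integral_Ioc_eq_integral_Ioo]
      refine setIntegral_nonneg measurableSet_Ioo (fun s hs => ?_)
      rw [hodef s hs.1.le]
      exact mul_nonneg (hKn s hs.1.le) (hmnn s ⟨hs.1.le, hs.2⟩)
    rw [Hm' b hb] at h0
    linarith
  -- positivity of m'
  have hpos : ∀ t ∈ Ici (0:ℝ), 0 < m' t := by
    by_contra hcon
    push_neg at hcon
    obtain ⟨t₀, ht₀, ht₀'⟩ := hcon
    have hZc : IsClosed (Ici (0:ℝ) ∩ m' ⁻¹' Iic 0) :=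
      hm'c.preimage_isClosed_of_isClosed isClosed_Ici isClosed_Iic
    have hZne : (Ici (0:ℝ) ∩ m' ⁻¹' Iic 0).Nonempty := ⟨t₀, ht₀, ht₀'⟩
    have hZbdd : BddBelow (Ici (0:ℝ) ∩ m' ⁻¹' Iic 0) := ⟨0, fun x hx => hx.1⟩
    obtain ⟨hb0, hble⟩ := hZc.csInf_mem hZne hZbdd
    have h1 : 1 ≤ m' (sInf (Ici (0:ℝ) ∩ m' ⁻¹' Iic 0)) := by
      refine key _ hb0 (fun s hs => ?_)
      by_contra hns
      push_neg at hns
      exact absurd (csInf_le hZbdd ⟨hs.1, hns⟩) (not_le.2 hs.2)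
    have h2 : m' (sInf (Ici (0:ℝ) ∩ m' ⁻¹' Iic 0)) ≤ 0 := hble
    linarith
  have hm'ge1 : ∀ t ∈ Ici (0:ℝ), 1 ≤ m' t :=
    fun t ht => key t ht (fun s hs => hpos s hs.1)
  have hmnn : ∀ t ∈ Ici (0:ℝ), 0 ≤ m t := by
    intro t ht
    have h1 : 0 ≤ ∫ u in (0:ℝ)..t, m' u :=
      intervalIntegral.integral_nonneg ht (fun u hu => (hpos u hu.1).le)
    rwa [Hm t ht] at h1
  -- m' is monotone on Ici 0
  have hmono : MonotoneOn m' (Ici 0) := by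
    refine monotoneOn_of_deriv_nonneg (convex_Ici 0) hm'c (fun x hx => ?_) (fun x hx => ?_)
    · rw [interior_Ici] at hx
      exact ((hm' x (mem_Ici.2 (le_of_lt hx))).hasDerivAt (Ici_mem_nhds hx)).differentiableAt.differentiableWithinAt
    · rw [interior_Ici] at hx
      rw [((hm' x (mem_Ici.2 (le_of_lt hx))).hasDerivAt (Ici_mem_nhds hx)).deriv]
      rw [hodef x (mem_Ici.2 (le_of_lt hx))]
      exact mul_nonneg (hKn x (mem_Ici.2 (le_of_lt hx))) (hmnn x (mem_Ici.2 (le_of_lt hx)))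
  -- m s ≤ s * m' s
  have hmle : ∀ s ∈ Ici (0:ℝ), m s ≤ s * m' s := by
    intro s hs
    have h1 : (∫ u in (0:ℝ)..s, m' u) ≤ ∫ _u in (0:ℝ)..s, m' s := by
      refine intervalIntegral.integral_mono_on hs
        ((hm'c.mono (by rw [uIcc_of_le hs]; exact Icc_subset_Ici_self)).intervalIntegrable)
        intervalIntegrable_const (fun x hx => hmono hx.1 hs hx.2)
    rw [Hm s hs, intervalIntegral.integral_const, smul_eq_mul, sub_zero] at h1
    exact h1
  -- tail bound for ∫ s(-K s)
  have htail : ∀ t, 0 ≤ t →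
      (∫ s in (0:ℝ)..t, s * (-K s)) ≤ ∫ s in Ioi (0:ℝ), s * (-K s) := by
    intro t ht
    rw [intervalIntegral.integral_of_le ht]
    refine setIntegral_mono_set hint ?_ (HasSubset.Subset.eventuallyLE Ioc_subset_Ioi_self)
    refine (ae_restrict_iff' measurableSet_Ioi).2 (ae_of_all _ (fun s hs => ?_))
    exact mul_nonneg (le_of_lt hs) (hKn s (mem_Ici.2 (le_of_lt hs)))
  set C : ℝ := ∫ s in Ioi (0:ℝ), s * (-K s) with hC
  -- interval integrability of s * (-K s)
  have hintKt : ∀ t, 0 ≤ t → IntervalIntegrable (fun s => s * (-K s)) volume 0 t := by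
    intro t ht
    rw [intervalIntegrable_iff, uIoc_of_le ht]
    exact hint.mono_set Ioc_subset_Ioi_self
  -- bound m' ≤ exp C
  have hbound : ∀ t ∈ Ici (0:ℝ), m' t ≤ Real.exp C := by
    intro t ht
    have hne : ∀ x ∈ Ici (0:ℝ), m' x ≠ 0 := fun x hx => ne_of_gt (hpos x hx)
    have Hlog : (∫ y in (0:ℝ)..t, m'' y / m' y) = Real.log (m' t) := by
      have h := intervalIntegral.integral_eq_sub_of_hasDeriv_right_of_le ht
        ((hm'c.log hne).mono Icc_subset_Ici_self)
        (fun x hx => ((hm' x hx.1.le).log (hne x hx.1.le)).mono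
          (Ioi_subset_Ici_self.trans (Ici_subset_Ici.2 hx.1.le)))
        (((hm''cont.div hm'c hne).mono
          (by rw [uIcc_of_le ht]; exact Icc_subset_Ici_self)).intervalIntegrable)
      rw [h, hm'0, Real.log_one, sub_zero]
    have hmono2 : (∫ y in (0:ℝ)..t, m'' y / m' y) ≤ ∫ s in (0:ℝ)..t, s * (-K s) := by
      refine intervalIntegral.integral_mono_on ht
        (((hm''cont.div hm'c hne).mono
          (by rw [uIcc_of_le ht]; exact Icc_subset_Ici_self)).intervalIntegrable)
        (hintKt t ht) (fun x hx => ?_)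
      have h1 : 0 < m' x := hpos x hx.1
      have h2 : m x ≤ x * m' x := hmle x hx.1
      have h3 : 0 ≤ -K x := hKn x hx.1
      rw [hodef x hx.1, div_le_iff₀ h1]
      nlinarith [mul_le_mul_of_nonneg_left h2 h3]
    have : Real.log (m' t) ≤ C := by
      rw [← Hlog]
      exact le_trans hmono2 (htail t ht)
    exact (Real.log_le_iff_le_exp (hpos t ht)).1 this
  -- integrability of (-K s) * m s on Ioi 0
  have hFint : IntegrableOn (fun s => (-K s) * m s) (Ioi 0) := by
    refine Integrable.mono' (hint.const_mul (Real.exp C))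
      (((hK.neg.mul hmc).mono Ioi_subset_Ici_self).aestronglyMeasurable measurableSet_Ioi) ?_
    filter_upwards [ae_restrict_mem measurableSet_Ioi] with s hs
    have h0 : (0:ℝ) ≤ s := le_of_lt hs
    have h3 : 0 ≤ -K s := hKn s h0
    rw [Real.norm_eq_abs, abs_of_nonneg (mul_nonneg h3 (hmnn s h0))]
    calc (-K s) * m s ≤ (-K s) * (s * m' s) :=
          mul_le_mul_of_nonneg_left (hmle s h0) h3
      _ ≤ (-K s) * (s * Real.exp C) := by
          refine mul_le_mul_of_nonneg_left ?_ h3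
          exact mul_le_mul_of_nonneg_left (hbound s h0) h0
      _ = Real.exp C * (s * (-K s)) := by ring
  -- limit
  have hlim := intervalIntegral_tendsto_integral_Ioi 0 hFint tendsto_id
  constructor
  · refine (tendsto_const_nhds.add hlim).congr' ?_
    filter_upwards [eventually_ge_atTop (0:ℝ)] with t ht
    have hcongr : (∫ y in (0:ℝ)..t, m'' y) = ∫ s in (0:ℝ)..t, (-K s) * m s := by
      refine intervalIntegral.integral_congr (fun x hx => ?_)
      rw [uIcc_of_le ht] at hx
      exact hodef x hx.1
    have := Hm' t ht
    rw [hcongr] at this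
    simp only [id_eq]
    linarith
  · have : 0 ≤ ∫ s in Ioi (0:ℝ), (-K s) * m s :=
      setIntegral_nonneg measurableSet_Ioi
        (fun s hs => mul_nonneg (hKn s (mem_Ici.2 (le_of_lt hs))) (hmnn s (mem_Ici.2 (le_of_lt hs))))
    linarith
end

section
/- Let λ ∈ (0, π/2] and n ≥ 2. If a complete noncompact Riemannian manifold M with base point p has the property that the initial vectors of rays representing distinct ends make pairwise angle at least 2λ at p, then the number of ends of M is at most 2·(π/(2λ))^{n-1}. -/
open Set Filter Real InnerProductGeometry Topology
set_option maxHeartbeats 1000000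

/-- A curve escapes to infinity if it eventually leaves every compact set. -/
def Escaping {M : Type*} [TopologicalSpace M] (α : ℝ → M) : Prop :=
  Continuous α ∧ Tendsto α atTop (Filter.cocompact M)

/-- Two curves are cofinal if for every compact set `D` they eventually lie in the
same connected component of the complement of `D`. -/
def Cofinal {M : Type*} [TopologicalSpace M] (α β : ℝ → M) : Prop :=
  ∀ D : Set M, IsCompact D → ∃ t₀ : ℝ, ∀ t₁ t₂, t₀ ≤ t₁ → t₀ ≤ t₂ →
    connectedComponentIn Dᶜ (α t₁) = connectedComponentIn Dᶜ (β t₂)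

/-- The set of ends of a space: cofinality classes of escaping curves. -/
def Ends (M : Type*) [TopologicalSpace M] : Type _ :=
  Quot (fun α β : {γ : ℝ → M // Escaping γ} => Cofinal α.1 β.1)

section PackingAux
open intervalIntegral MeasureTheory ENNReal

lemma sin_rescale {c φ : ℝ} (hc0 : 0 ≤ c) (hc1 : c ≤ 1) (hφ0 : 0 ≤ φ) (hφ : φ ≤ π) :
    c * Real.sin φ ≤ Real.sin (c * φ) := by
  have h := strictConcaveOn_sin_Icc.concaveOn.2 ⟨hφ0, hφ⟩
    ⟨le_refl (0:ℝ), pi_pos.le⟩ hc0 (show (0:ℝ) ≤ 1 - c by linarith)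
    (show c + (1 - c) = 1 by ring)
  simpa using h

lemma int_sin_pow_rescale (m : ℕ) {lam : ℝ} (h0 : 0 < lam) (h1 : lam ≤ π / 2) :
    (2 * lam / π) ^ (m + 1) * ∫ θ in (0:ℝ)..(π / 2), Real.sin θ ^ m
      ≤ ∫ θ in (0:ℝ)..lam, Real.sin θ ^ m := by
  set c := 2 * lam / π with hc
  have hπ : (0:ℝ) < π := pi_pos
  have hc0 : 0 < c := by positivity
  have hc1 : c ≤ 1 := by rw [hc, div_le_one hπ]; linarith
  have hkey : ∫ x in (0:ℝ)..(π/2), Real.sin (c * x) ^ m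
      = c⁻¹ * ∫ θ in (0:ℝ)..lam, Real.sin θ ^ m := by
    have h := intervalIntegral.integral_comp_mul_left (a := (0:ℝ)) (b := π/2)
      (fun θ => Real.sin θ ^ m) hc0.ne'
    have hlam : c * (π / 2) = lam := by rw [hc]; field_simp
    rw [mul_zero, hlam, smul_eq_mul] at h
    exact h
  have hmono : ∫ x in (0:ℝ)..(π/2), (c * Real.sin x) ^ m
      ≤ ∫ x in (0:ℝ)..(π/2), Real.sin (c * x) ^ m := by
    apply intervalIntegral.integral_mono_on (by positivity)
    · exact (Continuous.intervalIntegrable (by continuity) _ _)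
    · exact (Continuous.intervalIntegrable (by continuity) _ _)
    · intro x hx
      have hs : 0 ≤ Real.sin x := Real.sin_nonneg_of_nonneg_of_le_pi hx.1
        (by linarith [hx.2, pi_pos])
      apply pow_le_pow_left₀ (mul_nonneg hc0.le hs)
      exact sin_rescale hc0.le hc1 hx.1 (by linarith [hx.2, hπ])
  have hconst : ∫ x in (0:ℝ)..(π/2), (c * Real.sin x) ^ m
      = c ^ m * ∫ x in (0:ℝ)..(π/2), Real.sin x ^ m := by
    simp_rw [mul_pow]
    exact intervalIntegral.integral_const_mul _ _
  have := hmono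
  rw [hconst, hkey] at this
  have h2 : c * (c ^ m * ∫ x in (0:ℝ)..(π/2), Real.sin x ^ m)
      ≤ c * (c⁻¹ * ∫ θ in (0:ℝ)..lam, Real.sin θ ^ m) :=
    mul_le_mul_of_nonneg_left this hc0.le
  rw [← mul_assoc, ← mul_assoc, mul_inv_cancel₀ hc0.ne', one_mul, ← pow_succ'] at h2
  exact h2

lemma subst_cos (k : ℕ) {a : ℝ} (ha0 : 0 ≤ a) (ha : a ≤ π) :
    ∫ t in Real.cos a..1, Real.sqrt (1 - t ^ 2) ^ k = ∫ θ in (0:ℝ)..a, Real.sin θ ^ (k + 1) := by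
  have hg : Continuous fun t : ℝ => Real.sqrt (1 - t ^ 2) ^ k := by continuity
  have h := intervalIntegral.integral_comp_smul_deriv (a := (0:ℝ)) (b := a)
    (f := Real.cos) (f' := fun x => -Real.sin x)
    (g := fun t => Real.sqrt (1 - t ^ 2) ^ k)
    (fun x _ => Real.hasDerivAt_cos x) (Continuous.continuousOn (by continuity)) hg
  rw [Real.cos_zero] at h
  simp only [Function.comp] at h
  have hcongr : (∫ x in (0:ℝ)..a, (-Real.sin x) • (fun t => Real.sqrt (1 - t ^ 2) ^ k) (Real.cos x))
      = ∫ x in (0:ℝ)..a, -(Real.sin x ^ (k + 1)) := by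
    apply intervalIntegral.integral_congr
    intro x hx
    rw [uIcc_of_le ha0] at hx
    have hs : 0 ≤ Real.sin x := Real.sin_nonneg_of_nonneg_of_le_pi hx.1 (le_trans hx.2 ha)
    have : Real.sqrt (1 - Real.cos x ^ 2) = Real.sin x := by
      rw [← Real.sin_sq, Real.sqrt_sq hs]
    simp only [smul_eq_mul, this]
    ring
  rw [hcongr] at h
  rw [intervalIntegral.integral_neg] at h
  have := neg_eq_iff_eq_neg.mp h
  rw [this, ← intervalIntegral.integral_symm]

lemma min_eq_left_piece {lam t : ℝ} (h0 : 0 < lam) (h1 : lam < π / 2) (ht0 : 0 ≤ t)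
    (ht : t ≤ Real.cos lam) :
    min (Real.sqrt (1 - t ^ 2)) (t * Real.tan lam) = t * Real.tan lam := by
  have hcos : 0 < Real.cos lam := Real.cos_pos_of_mem_Ioo ⟨by linarith [pi_pos], h1⟩
  have hsin : 0 ≤ Real.sin lam := Real.sin_nonneg_of_nonneg_of_le_pi h0.le (by linarith [pi_pos])
  apply min_eq_right
  calc t * Real.tan lam ≤ Real.cos lam * Real.tan lam := by
        apply mul_le_mul_of_nonneg_right ht
        rw [Real.tan_eq_sin_div_cos]
        exact div_nonneg hsin hcos.le
    _ = Real.sin lam := by rw [Real.tan_eq_sin_div_cos]; field_simp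
    _ ≤ Real.sqrt (1 - t ^ 2) := by
        rw [show Real.sin lam = Real.sqrt (1 - Real.cos lam ^ 2) by
          rw [← Real.sin_sq, Real.sqrt_sq hsin]]
        apply Real.sqrt_le_sqrt
        nlinarith

lemma min_eq_right_piece {lam t : ℝ} (h0 : 0 < lam) (h1 : lam < π / 2)
    (ht : Real.cos lam ≤ t) (ht1 : t ≤ 1) :
    min (Real.sqrt (1 - t ^ 2)) (t * Real.tan lam) = Real.sqrt (1 - t ^ 2) := by
  have hcos : 0 < Real.cos lam := Real.cos_pos_of_mem_Ioo ⟨by linarith [pi_pos], h1⟩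
  have hsin : 0 ≤ Real.sin lam := Real.sin_nonneg_of_nonneg_of_le_pi h0.le (by linarith [pi_pos])
  apply min_eq_left
  calc Real.sqrt (1 - t ^ 2) ≤ Real.sqrt (1 - Real.cos lam ^ 2) := by
        apply Real.sqrt_le_sqrt; nlinarith
    _ = Real.sin lam := by rw [← Real.sin_sq, Real.sqrt_sq hsin]
    _ = Real.cos lam * Real.tan lam := by rw [Real.tan_eq_sin_div_cos]; field_simp
    _ ≤ t * Real.tan lam := by
        apply mul_le_mul_of_nonneg_right ht
        rw [Real.tan_eq_sin_div_cos]; exact div_nonneg hsin hcos.le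

lemma key_integral (m : ℕ) {lam : ℝ} (h0 : 0 < lam) (h1 : lam < π / 2) :
    (2 * lam / π) ^ (m + 1) * ∫ t in (0:ℝ)..1, Real.sqrt (1 - t ^ 2) ^ (m + 1)
      ≤ ∫ t in (0:ℝ)..1, (min (Real.sqrt (1 - t ^ 2)) (t * Real.tan lam)) ^ (m + 1) := by
  have hπ : (0:ℝ) < π := pi_pos
  have hcos : 0 < Real.cos lam := Real.cos_pos_of_mem_Ioo ⟨by linarith, h1⟩
  have hcos1 : Real.cos lam ≤ 1 := Real.cos_le_one lam
  have hsin : 0 < Real.sin lam := Real.sin_pos_of_pos_of_lt_pi h0 (by linarith)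
  have hmincont : Continuous fun t : ℝ =>
      (min (Real.sqrt (1 - t ^ 2)) (t * Real.tan lam)) ^ (m + 1) := by continuity
  -- split RHS
  have hsplit : (∫ t in (0:ℝ)..Real.cos lam,
        (min (Real.sqrt (1 - t ^ 2)) (t * Real.tan lam)) ^ (m + 1))
      + (∫ t in Real.cos lam..1, (min (Real.sqrt (1 - t ^ 2)) (t * Real.tan lam)) ^ (m + 1))
      = ∫ t in (0:ℝ)..1, (min (Real.sqrt (1 - t ^ 2)) (t * Real.tan lam)) ^ (m + 1) :=
    intervalIntegral.integral_add_adjacent_intervals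
      (hmincont.intervalIntegrable _ _) (hmincont.intervalIntegrable _ _)
  -- piece 1
  have hp1 : (∫ t in (0:ℝ)..Real.cos lam,
        (min (Real.sqrt (1 - t ^ 2)) (t * Real.tan lam)) ^ (m + 1))
      = Real.sin lam ^ (m + 1) * Real.cos lam / (m + 2) := by
    have : (∫ t in (0:ℝ)..Real.cos lam,
          (min (Real.sqrt (1 - t ^ 2)) (t * Real.tan lam)) ^ (m + 1))
        = ∫ t in (0:ℝ)..Real.cos lam, Real.tan lam ^ (m + 1) * t ^ (m + 1) := by
      apply intervalIntegral.integral_congr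
      intro t htt
      rw [uIcc_of_le hcos.le] at htt
      dsimp only
      rw [min_eq_left_piece h0 h1 htt.1 htt.2, mul_pow, mul_comm]
    rw [this, intervalIntegral.integral_const_mul, integral_pow]
    rw [Real.tan_eq_sin_div_cos]
    have h2 : (0:ℝ) ^ (m + 1 + 1) = 0 := zero_pow (by omega)
    rw [h2, div_pow]
    field_simp
    push_cast
    ring
  -- piece 2
  have hp2 : (∫ t in Real.cos lam..1, (min (Real.sqrt (1 - t ^ 2)) (t * Real.tan lam)) ^ (m + 1))
      = ∫ θ in (0:ℝ)..lam, Real.sin θ ^ (m + 2) := by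
    have : (∫ t in Real.cos lam..1, (min (Real.sqrt (1 - t ^ 2)) (t * Real.tan lam)) ^ (m + 1))
        = ∫ t in Real.cos lam..1, Real.sqrt (1 - t ^ 2) ^ (m + 1) := by
      apply intervalIntegral.integral_congr
      intro t htt
      rw [uIcc_of_le hcos1] at htt
      dsimp only
      rw [min_eq_right_piece h0 h1 htt.1 htt.2]
    rw [this, subst_cos (m + 1) h0.le (by linarith)]
  -- LHS value
  have hlhs : (∫ t in (0:ℝ)..1, Real.sqrt (1 - t ^ 2) ^ (m + 1))
      = ∫ θ in (0:ℝ)..(π / 2), Real.sin θ ^ (m + 2) := by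
    have := subst_cos (m + 1) (a := π / 2) (by linarith) (by linarith)
    rwa [Real.cos_pi_div_two] at this
  -- sin power reduction
  have hred : ∀ b : ℝ, (∫ θ in (0:ℝ)..b, Real.sin θ ^ (m + 2))
      = (Real.sin 0 ^ (m + 1) * Real.cos 0 - Real.sin b ^ (m + 1) * Real.cos b) / (m + 2)
        + (m + 1) / (m + 2) * ∫ θ in (0:ℝ)..b, Real.sin θ ^ m := fun b =>
    integral_sin_pow m
  have hrlam := hred lam
  have hrpi := hred (π / 2)
  simp only [Real.sin_zero, Real.cos_pi_div_two, Real.sin_pi_div_two, Real.cos_zero] at hrlam hrpi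
  have hresc := int_sin_pow_rescale m h0 h1.le
  set Ipi := ∫ θ in (0:ℝ)..(π / 2), Real.sin θ ^ m
  set Ilam := ∫ θ in (0:ℝ)..lam, Real.sin θ ^ m
  rw [← hsplit, hp1, hp2, hlhs, hrlam, hrpi]
  have hzp : ((0:ℝ) ^ (m + 1) * 1 - 1 ^ (m + 1) * 0) / ((m:ℝ) + 2) = 0 := by
    rw [zero_pow (by omega : m + 1 ≠ 0)]; ring
  have hzq : ((0:ℝ) ^ (m + 1) * 1 - Real.sin lam ^ (m + 1) * Real.cos lam) / ((m:ℝ) + 2)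
      = -(Real.sin lam ^ (m + 1) * Real.cos lam / ((m:ℝ) + 2)) := by
    rw [zero_pow (by omega : m + 1 ≠ 0)]; ring
  rw [hzp, hzq, zero_add]
  have hfrac : (0:ℝ) ≤ ((m:ℝ) + 1) / ((m:ℝ) + 2) := by positivity
  have hmul := mul_le_mul_of_nonneg_left hresc hfrac
  have hEq : (2 * lam / π) ^ (m + 1) * (((m:ℝ) + 1) / ((m:ℝ) + 2) * Ipi)
      = ((m:ℝ) + 1) / ((m:ℝ) + 2) * ((2 * lam / π) ^ (m + 1) * Ipi) := by ring
  rw [hEq]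
  linarith [hmul]

lemma vol_region (m : ℕ) (ρ : ℝ → ℝ) (hρ : Continuous ρ)
    (hρpos : ∀ t ∈ Ioo (0:ℝ) 1, 0 ≤ ρ t) :
    (volume.prod (volume : Measure (EuclideanSpace ℝ (Fin (m + 1)))))
      {p : ℝ × EuclideanSpace ℝ (Fin (m + 1)) | p.1 ∈ Ioo (0:ℝ) 1 ∧ ‖p.2‖ < ρ p.1}
    = ENNReal.ofReal (∫ t in (0:ℝ)..1, ρ t ^ (m + 1))
        * volume (Metric.ball (0 : EuclideanSpace ℝ (Fin (m + 1))) 1) := by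
  set F := EuclideanSpace ℝ (Fin (m + 1))
  set S : Set (ℝ × F) := {p : ℝ × F | p.1 ∈ Ioo (0:ℝ) 1 ∧ ‖p.2‖ < ρ p.1} with hS
  set ν := volume (Metric.ball (0 : F) 1) with hν
  have hSopen : IsOpen S := by
    apply IsOpen.inter
    · exact isOpen_Ioo.preimage continuous_fst
    · exact isOpen_lt (continuous_norm.comp continuous_snd) (hρ.comp continuous_fst)
  rw [Measure.prod_apply hSopen.measurableSet]
  have hslice : ∀ t : ℝ, volume (Prod.mk t ⁻¹' S)
      = Set.indicator (Ioo (0:ℝ) 1) (fun t => ENNReal.ofReal (ρ t ^ (m + 1)) * ν) t := by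
    intro t
    by_cases ht : t ∈ Ioo (0:ℝ) 1
    · have : Prod.mk t ⁻¹' S = Metric.ball (0 : F) (ρ t) := by
        ext y
        simp only [hS, mem_preimage, mem_setOf_eq, Metric.mem_ball, dist_zero_right]
        constructor
        · rintro ⟨-, h2⟩; exact h2
        · intro h; exact ⟨ht, h⟩
      rw [this, Set.indicator_of_mem ht]
      rw [Measure.addHaar_ball _ _ (hρpos t ht), finrank_euclideanSpace_fin]
    · have : Prod.mk t ⁻¹' S = (∅ : Set F) := by
        ext y
        simp only [hS, mem_preimage, mem_setOf_eq, mem_empty_iff_false, iff_false, not_and]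
        intro h; exact absurd h ht
      rw [this, measure_empty, Set.indicator_of_notMem ht]
  rw [lintegral_congr hslice, lintegral_indicator measurableSet_Ioo]
  have hmeas : Measurable fun t => ENNReal.ofReal (ρ t ^ (m + 1)) :=
    (ENNReal.measurable_ofReal).comp ((hρ.pow (m+1)).measurable)
  rw [lintegral_mul_const _ hmeas]
  congr 1
  have hint : IntegrableOn (fun t => ρ t ^ (m + 1)) (Ioo (0:ℝ) 1) := by
    apply (Continuous.integrableOn_Icc (by continuity)).mono_set Ioo_subset_Icc_self
  have hnn : 0 ≤ᵐ[volume.restrict (Ioo (0:ℝ) 1)] fun t => ρ t ^ (m + 1) := by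
    rw [EventuallyLE, ae_restrict_iff' measurableSet_Ioo]
    exact Eventually.of_forall fun t ht => pow_nonneg (hρpos t ht) _
  rw [← ofReal_integral_eq_lintegral_ofReal hint hnn]
  congr 1
  rw [intervalIntegral.integral_of_le zero_le_one, integral_Ioc_eq_integral_Ioo]

noncomputable def spl (m : ℕ) :
    EuclideanSpace ℝ (Fin (m + 2)) ≃ᵐ ℝ × EuclideanSpace ℝ (Fin (m + 1)) :=
  (MeasurableEquiv.toLp 2 (Fin (m + 2) → ℝ)).symm.trans
    ((MeasurableEquiv.piFinSuccAbove (fun _ : Fin (m + 2) => ℝ) 0).trans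
      ((MeasurableEquiv.refl ℝ).prodCongr (MeasurableEquiv.toLp 2 (Fin (m + 1) → ℝ)).symm.symm))

lemma spl_measurePreserving (m : ℕ) :
    MeasurePreserving (spl m) volume (volume.prod volume) := by
  have m1 := EuclideanSpace.volume_preserving_symm_measurableEquiv_toLp (Fin (m + 2))
  have m2 := measurePreserving_piFinSuccAbove (fun _ : Fin (m + 2) => (volume : Measure ℝ)) 0
  simp only [← volume_pi] at m2
  have m3 := (MeasurePreserving.id (volume : Measure ℝ)).prod
    (EuclideanSpace.volume_preserving_symm_measurableEquiv_toLp (Fin (m + 1))).symm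
  have hcoe : ⇑(spl m) = (Prod.map id ⇑(MeasurableEquiv.toLp 2 (Fin (m + 1) → ℝ)).symm.symm)
      ∘ ⇑(MeasurableEquiv.piFinSuccAbove (fun _ : Fin (m + 2) => ℝ) 0)
      ∘ ⇑(MeasurableEquiv.toLp 2 (Fin (m + 2) → ℝ)).symm := rfl
  rw [hcoe, ← Function.comp_assoc]
  exact (m3.comp m2).comp m1

lemma spl_fst (m : ℕ) (x : EuclideanSpace ℝ (Fin (m + 2))) : (spl m x).1 = x 0 := rfl

lemma spl_snd (m : ℕ) (x : EuclideanSpace ℝ (Fin (m + 2))) (j : Fin (m + 1)) :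
    (spl m x).2 j = x j.succ := rfl

lemma norm_split (m : ℕ) (x : EuclideanSpace ℝ (Fin (m + 2))) :
    ‖x‖ ^ 2 = (x 0) ^ 2 + ‖(spl m x).2‖ ^ 2 := by
  rw [EuclideanSpace.norm_eq, EuclideanSpace.norm_eq, Real.sq_sqrt (by positivity),
    Real.sq_sqrt (by positivity), Fin.sum_univ_succ]
  simp [spl_snd, Real.norm_eq_abs, sq_abs]




section cone
variable (m : ℕ) {lam : ℝ}

lemma cone_eq_preimage (h0 : 0 < lam) (h1 : lam < π / 2) :
    {x : EuclideanSpace ℝ (Fin (m + 2)) | ‖x‖ < 1 ∧ ‖x‖ * Real.cos lam < x 0}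
      = spl m ⁻¹' {p : ℝ × EuclideanSpace ℝ (Fin (m + 1)) |
          p.1 ∈ Ioo (0:ℝ) 1 ∧ ‖p.2‖ < min (Real.sqrt (1 - p.1 ^ 2)) (p.1 * Real.tan lam)} := by
  have hcos : 0 < Real.cos lam := Real.cos_pos_of_mem_Ioo ⟨by linarith [pi_pos], h1⟩
  have hsin : 0 < Real.sin lam := Real.sin_pos_of_pos_of_lt_pi h0 (by linarith [pi_pos])
  have hsin2 : Real.sin lam ^ 2 = 1 - Real.cos lam ^ 2 := Real.sin_sq lam
  ext x
  simp only [mem_setOf_eq, mem_preimage, spl_fst, mem_Ioo, lt_min_iff]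
  set t := x 0 with hts
  set y := (spl m x).2 with hys
  have hsq := norm_split m x
  have hny : (0:ℝ) ≤ ‖y‖ := norm_nonneg y
  have hnx : (0:ℝ) ≤ ‖x‖ := norm_nonneg x
  constructor
  · rintro ⟨hn, hc⟩
    have hx2 : ‖x‖ ^ 2 < 1 := by nlinarith
    have ht0 : 0 < t := by nlinarith [mul_nonneg hnx hcos.le]
    have ht1 : t < 1 := by nlinarith
    have hsq2 : ‖x‖ ^ 2 * Real.cos lam ^ 2 < t ^ 2 := by
      have hpos : 0 < t + ‖x‖ * Real.cos lam :=
        add_pos_of_pos_of_nonneg ht0 (mul_nonneg hnx hcos.le)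
      nlinarith [mul_pos (sub_pos.mpr hc) hpos]
    have hyc : ‖y‖ * Real.cos lam < t * Real.sin lam := by
      apply lt_of_pow_lt_pow_left₀ 2 (by positivity)
      rw [mul_pow, mul_pow]
      nlinarith
    refine ⟨⟨ht0, ht1⟩, ?_, ?_⟩
    · rw [Real.lt_sqrt hny]; nlinarith
    · rw [Real.tan_eq_sin_div_cos]
      rw [show t * (Real.sin lam / Real.cos lam) = t * Real.sin lam / Real.cos lam by ring,
        lt_div_iff₀ hcos]
      exact hyc
  · rintro ⟨⟨ht0, ht1⟩, hy1, hy2⟩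
    have hy1sq : ‖y‖ ^ 2 < 1 - t ^ 2 := (Real.lt_sqrt hny).mp hy1
    have hyc : ‖y‖ * Real.cos lam < t * Real.sin lam := by
      rw [Real.tan_eq_sin_div_cos,
        show t * (Real.sin lam / Real.cos lam) = t * Real.sin lam / Real.cos lam by ring,
        lt_div_iff₀ hcos] at hy2
      exact hy2
    constructor
    · apply lt_of_pow_lt_pow_left₀ 2 zero_le_one
      rw [one_pow]; nlinarith
    · apply lt_of_pow_lt_pow_left₀ 2 ht0.le
      rw [mul_pow]
      nlinarith [mul_pow ‖y‖ (Real.cos lam) 2, pow_lt_pow_left₀ hyc (by positivity) (by norm_num : (2:ℕ) ≠ 0)]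
end cone

lemma half_eq_preimage (m : ℕ) :
    {x : EuclideanSpace ℝ (Fin (m + 2)) | ‖x‖ < 1 ∧ 0 < x 0}
      = spl m ⁻¹' {p : ℝ × EuclideanSpace ℝ (Fin (m + 1)) |
          p.1 ∈ Ioo (0:ℝ) 1 ∧ ‖p.2‖ < Real.sqrt (1 - p.1 ^ 2)} := by
  ext x
  simp only [mem_setOf_eq, mem_preimage, spl_fst, mem_Ioo]
  set t := x 0 with hts
  set y := (spl m x).2 with hys
  have hsq := norm_split m x
  have hny : (0:ℝ) ≤ ‖y‖ := norm_nonneg y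
  have hnx : (0:ℝ) ≤ ‖x‖ := norm_nonneg x
  constructor
  · rintro ⟨hn, ht0⟩
    have hx2 : ‖x‖ ^ 2 < 1 := by nlinarith
    have ht1 : t < 1 := by nlinarith
    exact ⟨⟨ht0, ht1⟩, by rw [Real.lt_sqrt hny]; nlinarith⟩
  · rintro ⟨⟨ht0, ht1⟩, hy1⟩
    have hy1sq : ‖y‖ ^ 2 < 1 - t ^ 2 := (Real.lt_sqrt hny).mp hy1
    refine ⟨?_, ht0⟩
    apply lt_of_pow_lt_pow_left₀ 2 zero_le_one
    rw [one_pow]; nlinarith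

lemma cone_volume (m : ℕ) {lam : ℝ} (h0 : 0 < lam) (h1 : lam < π / 2) :
    volume {x : EuclideanSpace ℝ (Fin (m + 2)) | ‖x‖ < 1 ∧ ‖x‖ * Real.cos lam < x 0}
      = ENNReal.ofReal (∫ t in (0:ℝ)..1, (min (Real.sqrt (1 - t ^ 2)) (t * Real.tan lam)) ^ (m + 1))
        * volume (Metric.ball (0 : EuclideanSpace ℝ (Fin (m + 1))) 1) := by
  have hcos : 0 < Real.cos lam := Real.cos_pos_of_mem_Ioo ⟨by linarith [pi_pos], h1⟩
  have hsin : 0 < Real.sin lam := Real.sin_pos_of_pos_of_lt_pi h0 (by linarith [pi_pos])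
  have htan : 0 ≤ Real.tan lam := by
    rw [Real.tan_eq_sin_div_cos]; exact div_nonneg hsin.le hcos.le
  set ρ : ℝ → ℝ := fun t => min (Real.sqrt (1 - t ^ 2)) (t * Real.tan lam) with hρ
  have hρc : Continuous ρ := by
    apply Continuous.min
    · exact (continuous_const.sub (continuous_pow 2)).sqrt
    · exact continuous_id.mul continuous_const
  have hρpos : ∀ t ∈ Ioo (0:ℝ) 1, 0 ≤ ρ t := by
    intro t ht
    exact le_min (Real.sqrt_nonneg _) (mul_nonneg ht.1.le htan)
  have hSopen : IsOpen {p : ℝ × EuclideanSpace ℝ (Fin (m + 1)) |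
      p.1 ∈ Ioo (0:ℝ) 1 ∧ ‖p.2‖ < ρ p.1} := by
    apply IsOpen.inter
    · exact isOpen_Ioo.preimage continuous_fst
    · exact isOpen_lt (continuous_norm.comp continuous_snd) (hρc.comp continuous_fst)
  rw [cone_eq_preimage m h0 h1,
    (spl_measurePreserving m).measure_preimage hSopen.measurableSet.nullMeasurableSet]
  exact vol_region m ρ hρc hρpos

lemma half_volume (m : ℕ) :
    volume {x : EuclideanSpace ℝ (Fin (m + 2)) | ‖x‖ < 1 ∧ 0 < x 0}
      = ENNReal.ofReal (∫ t in (0:ℝ)..1, Real.sqrt (1 - t ^ 2) ^ (m + 1))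
        * volume (Metric.ball (0 : EuclideanSpace ℝ (Fin (m + 1))) 1) := by
  set ρ : ℝ → ℝ := fun t => Real.sqrt (1 - t ^ 2) with hρ
  have hρc : Continuous ρ := (continuous_const.sub (continuous_pow 2)).sqrt
  have hρpos : ∀ t ∈ Ioo (0:ℝ) 1, 0 ≤ ρ t := fun t _ => Real.sqrt_nonneg _
  have hSopen : IsOpen {p : ℝ × EuclideanSpace ℝ (Fin (m + 1)) |
      p.1 ∈ Ioo (0:ℝ) 1 ∧ ‖p.2‖ < ρ p.1} := by
    apply IsOpen.inter
    · exact isOpen_Ioo.preimage continuous_fst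
    · exact isOpen_lt (continuous_norm.comp continuous_snd) (hρc.comp continuous_fst)
  rw [half_eq_preimage m,
    (spl_measurePreserving m).measure_preimage hSopen.measurableSet.nullMeasurableSet]
  exact vol_region m ρ hρc hρpos

lemma x0_continuous (m : ℕ) : Continuous fun x : EuclideanSpace ℝ (Fin (m + 2)) => x 0 := by
  have : (fun x : EuclideanSpace ℝ (Fin (m + 2)) => x 0)
      = fun x : EuclideanSpace ℝ (Fin (m + 2)) =>
        (inner ℝ x (EuclideanSpace.single 0 (1:ℝ)) : ℝ) := by
    funext x
    rw [EuclideanSpace.inner_single_right]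
    simp
  rw [this]
  exact Continuous.inner continuous_id continuous_const

lemma ball_eq_two_half (m : ℕ) :
    volume (Metric.ball (0 : EuclideanSpace ℝ (Fin (m + 2))) 1)
      = 2 * volume {x : EuclideanSpace ℝ (Fin (m + 2)) | ‖x‖ < 1 ∧ 0 < x 0} := by
  set E := EuclideanSpace ℝ (Fin (m + 2))
  set H : Set E := {x | ‖x‖ < 1 ∧ 0 < x 0} with hH
  set Hm : Set E := {x | ‖x‖ < 1 ∧ x 0 < 0} with hHm
  set Z : Set E := {x | ‖x‖ < 1 ∧ x 0 = 0} with hZ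
  have hHopen : IsOpen H := by
    apply IsOpen.inter (isOpen_lt continuous_norm continuous_const)
    exact isOpen_lt continuous_const (x0_continuous m)
  have hHmopen : IsOpen Hm := by
    apply IsOpen.inter (isOpen_lt continuous_norm continuous_const)
    exact isOpen_lt (x0_continuous m) continuous_const
  have hunion : Metric.ball (0 : E) 1 = (H ∪ Hm) ∪ Z := by
    ext x
    simp only [Metric.mem_ball, dist_zero_right, mem_union, hH, hHm, hZ, mem_setOf_eq]
    constructor
    · intro hx
      rcases lt_trichotomy (x 0) 0 with h | h | h
      · exact Or.inl (Or.inr ⟨hx, h⟩)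
      · exact Or.inr ⟨hx, h⟩
      · exact Or.inl (Or.inl ⟨hx, h⟩)
    · rintro ((⟨h, -⟩ | ⟨h, -⟩) | ⟨h, -⟩) <;> exact h
  have hZ0 : volume Z = 0 := by
    set l : EuclideanSpace ℝ (Fin (m + 2)) →ₗ[ℝ] ℝ :=
      (LinearMap.proj 0).comp (WithLp.linearEquiv 2 ℝ (Fin (m + 2) → ℝ)).toLinearMap
    have hker : Z ⊆ (LinearMap.ker l : Submodule ℝ E) := by
      intro x hx
      exact hx.2
    have hne : LinearMap.ker l ≠ ⊤ := by
      intro h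
      have h1 : EuclideanSpace.single 0 (1:ℝ) ∈ LinearMap.ker l := h ▸ Submodule.mem_top
      rw [LinearMap.mem_ker] at h1
      simp [l, EuclideanSpace.single_apply] at h1
    exact measure_mono_null hker (Measure.addHaar_submodule volume _ hne)
  have hHmH : volume Hm = volume H := by
    have : Hm = -H := by
      ext x
      simp only [Set.mem_neg, hH, hHm, mem_setOf_eq, norm_neg]
      have hx0 : (-x) 0 = -(x 0) := rfl
      rw [hx0]
      constructor
      · rintro ⟨h1, h2⟩; exact ⟨h1, by linarith⟩
      · rintro ⟨h1, h2⟩; exact ⟨h1, by linarith⟩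
    rw [this, Measure.measure_neg]
  have hdisj1 : Disjoint H Hm := by
    rw [Set.disjoint_left]
    rintro x ⟨-, h1⟩ ⟨-, h2⟩
    linarith
  have hdisj2 : Disjoint (H ∪ Hm) Z := by
    rw [Set.disjoint_left]
    rintro x (⟨-, h1⟩ | ⟨-, h1⟩) ⟨-, h2⟩ <;> linarith
  rw [hunion, measure_union hdisj2 (by
      rw [hZ, Set.setOf_and]
      exact (isOpen_lt continuous_norm continuous_const).measurableSet.inter
        (measurableSet_eq_fun (x0_continuous m).measurable measurable_const)),
    measure_union hdisj1 hHmopen.measurableSet, hZ0, hHmH]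
  ring

lemma cone_congr (m : ℕ) (c : ℝ) (v : EuclideanSpace ℝ (Fin (m + 2))) (hv : ‖v‖ = 1) :
    volume {x : EuclideanSpace ℝ (Fin (m + 2)) | ‖x‖ < 1 ∧ ‖x‖ * c < (inner ℝ x v : ℝ)}
      = volume {x : EuclideanSpace ℝ (Fin (m + 2)) | ‖x‖ < 1 ∧ ‖x‖ * c < x 0} := by
  have horth : Orthonormal ℝ (Set.restrict {(0 : Fin (m + 2))} (fun _ => v)) := by
    constructor
    · intro i; exact hv
    · intro i j hij
      exact absurd (Subsingleton.elim i j) hij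
  obtain ⟨b, hb⟩ := Orthonormal.exists_orthonormalBasis_extension_of_card_eq (𝕜 := ℝ)
    (by simp) horth
  have hbv : b 0 = v := hb 0 rfl
  have hset : {x : EuclideanSpace ℝ (Fin (m + 2)) | ‖x‖ < 1 ∧ ‖x‖ * c < (inner ℝ x v : ℝ)}
      = b.repr ⁻¹' {x : EuclideanSpace ℝ (Fin (m + 2)) | ‖x‖ < 1 ∧ ‖x‖ * c < x 0} := by
    ext x
    simp only [mem_setOf_eq, mem_preimage]
    rw [b.repr.norm_map]
    have hinner : (inner ℝ x v : ℝ) = (b.repr x) 0 := by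
      rw [← hbv, ← b.repr.inner_map_map x (b 0), b.repr_self]
      rw [EuclideanSpace.inner_single_right]
      simp
    rw [hinner]
  have hopen : IsOpen {x : EuclideanSpace ℝ (Fin (m + 2)) | ‖x‖ < 1 ∧ ‖x‖ * c < x 0} := by
    rw [Set.setOf_and]
    exact (isOpen_lt continuous_norm continuous_const).inter
      (isOpen_lt (continuous_norm.mul continuous_const) (x0_continuous m))
  rw [hset, b.measurePreserving_repr.measure_preimage hopen.measurableSet.nullMeasurableSet]

lemma cones_disjoint {n : ℕ} {lam : ℝ} (h0 : 0 < lam) (h1 : lam ≤ π / 2)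
    {v w : EuclideanSpace ℝ (Fin n)} (hv : ‖v‖ = 1) (hw : ‖w‖ = 1)
    (hvw : (inner ℝ v w : ℝ) ≤ Real.cos (2 * lam)) :
    Disjoint {x : EuclideanSpace ℝ (Fin n) | ‖x‖ < 1 ∧ ‖x‖ * Real.cos lam < (inner ℝ x v : ℝ)}
      {x : EuclideanSpace ℝ (Fin n) | ‖x‖ < 1 ∧ ‖x‖ * Real.cos lam < (inner ℝ x w : ℝ)} := by
  have hπ : (0:ℝ) < π := pi_pos
  have hcos : 0 ≤ Real.cos lam := Real.cos_nonneg_of_mem_Icc ⟨by linarith, h1⟩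
  have hsin : 0 < Real.sin lam := Real.sin_pos_of_pos_of_lt_pi h0 (by linarith)
  have hsc : Real.sin lam ^ 2 = 1 - Real.cos lam ^ 2 := Real.sin_sq lam
  rw [Set.disjoint_left]
  rintro x ⟨hx1, hxv⟩ ⟨-, hxw⟩
  have hxne : x ≠ 0 := by
    rintro rfl
    simp only [inner_zero_left, norm_zero, zero_mul] at hxv
    exact lt_irrefl 0 hxv
  have hr : 0 < ‖x‖ := norm_pos_iff.mpr hxne
  set u : EuclideanSpace ℝ (Fin n) := ‖x‖⁻¹ • x with hu
  have hun : ‖u‖ = 1 := by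
    rw [hu, norm_smul, norm_inv, norm_norm, inv_mul_cancel₀ hr.ne']
  set a : ℝ := inner ℝ (v : EuclideanSpace ℝ (Fin n)) u with hadef
  set b : ℝ := inner ℝ (w : EuclideanSpace ℝ (Fin n)) u with hbdef
  have hca : Real.cos lam < a := by
    rw [hadef, real_inner_comm, hu, real_inner_smul_left]
    rw [show Real.cos lam = ‖x‖⁻¹ * (‖x‖ * Real.cos lam) by field_simp]
    exact mul_lt_mul_of_pos_left hxv (by positivity)
  have hcb : Real.cos lam < b := by
    rw [hbdef, real_inner_comm, hu, real_inner_smul_left]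
    rw [show Real.cos lam = ‖x‖⁻¹ * (‖x‖ * Real.cos lam) by field_simp]
    exact mul_lt_mul_of_pos_left hxw (by positivity)
  have ha1 : a ≤ 1 := by
    have := real_inner_le_norm v u
    rwa [hv, hun, one_mul] at this
  have hb1 : b ≤ 1 := by
    have := real_inner_le_norm w u
    rwa [hw, hun, one_mul] at this
  have hnv : ‖v - a • u‖ ^ 2 = 1 - a ^ 2 := by
    rw [norm_sub_sq_real, real_inner_smul_right, norm_smul, hv, hun]
    simp [Real.norm_eq_abs, ← hadef, mul_pow, sq_abs]
    ring
  have hnw : ‖w - b • u‖ ^ 2 = 1 - b ^ 2 := by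
    rw [norm_sub_sq_real, real_inner_smul_right, norm_smul, hw, hun]
    simp [Real.norm_eq_abs, ← hbdef, mul_pow, sq_abs]
    ring
  have hnv' : ‖v - a • u‖ < Real.sin lam := by
    apply lt_of_pow_lt_pow_left₀ 2 hsin.le
    rw [hnv, hsc]
    nlinarith
  have hnw' : ‖w - b • u‖ < Real.sin lam := by
    apply lt_of_pow_lt_pow_left₀ 2 hsin.le
    rw [hnw, hsc]
    nlinarith
  have hexp : (inner ℝ (v - a • u) (w - b • u) : ℝ) = (inner ℝ v w : ℝ) - a * b := by
    simp only [inner_sub_left, inner_sub_right, real_inner_smul_left, real_inner_smul_right]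
    rw [real_inner_self_eq_norm_sq, hun,
      show (inner ℝ u w : ℝ) = b from by rw [hbdef]; exact (real_inner_comm u w).symm, ← hadef]
    ring
  have hCS : -(‖v - a • u‖ * ‖w - b • u‖) ≤ (inner ℝ (v - a • u) (w - b • u) : ℝ) :=
    neg_le_of_abs_le (abs_real_inner_le_norm _ _)
  have hprod : ‖v - a • u‖ * ‖w - b • u‖ < Real.sin lam ^ 2 := by
    rw [sq]
    exact mul_lt_mul'' hnv' hnw' (norm_nonneg _) (norm_nonneg _)
  have hab : Real.cos lam ^ 2 < a * b := by nlinarith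
  have hfin : Real.cos (2 * lam) < (inner ℝ v w : ℝ) := by
    rw [Real.cos_two_mul']
    have := hexp ▸ hCS
    nlinarith
  exact absurd hvw (not_le.mpr hfin)

lemma packing {n : ℕ} (hn : 2 ≤ n) {lam : ℝ} (h0 : 0 < lam) (h1 : lam ≤ π / 2)
    {ι : Type*} (v : ι → EuclideanSpace ℝ (Fin n)) (hu : ∀ i, ‖v i‖ = 1)
    (ha : ∀ i j, i ≠ j → (inner ℝ (v i) (v j) : ℝ) ≤ Real.cos (2 * lam)) :
    Finite ι ∧ (Nat.card ι : ℝ) ≤ 2 * (π / (2 * lam)) ^ (n - 1) := by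
  obtain ⟨m, rfl⟩ : ∃ m, n = m + 2 := ⟨n - 2, by omega⟩
  have hn1 : m + 2 - 1 = m + 1 := by omega
  rw [hn1]
  set K : ι → Set (EuclideanSpace ℝ (Fin (m + 2))) := fun i =>
    {x : EuclideanSpace ℝ (Fin (m + 2)) | ‖x‖ < 1 ∧ ‖x‖ * Real.cos lam < (inner ℝ x (v i) : ℝ)}
    with hK
  have hπ : (0:ℝ) < π := pi_pos
  set c := 2 * lam / π with hc
  have hc0 : 0 < c := by positivity
  set Ihalf := ∫ t in (0:ℝ)..1, Real.sqrt (1 - t ^ 2) ^ (m + 1) with hIhalf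
  have hIpos : 0 < Ihalf := by
    apply intervalIntegral.intervalIntegral_pos_of_pos_on
    · exact (Continuous.intervalIntegrable (by continuity) _ _)
    · intro t ht
      have h2 : 0 < 1 - t ^ 2 := by nlinarith [ht.1, ht.2]
      exact pow_pos (Real.sqrt_pos.mpr h2) _
    · norm_num
  set VB := volume (Metric.ball (0 : EuclideanSpace ℝ (Fin (m + 1))) 1) with hVB
  have hVB0 : VB ≠ 0 := (Metric.measure_ball_pos volume _ one_pos).ne'
  have hVBt : VB ≠ ⊤ := measure_ball_lt_top.ne
  obtain ⟨A, hAge, hAvol⟩ : ∃ A : ℝ, c ^ (m + 1) * Ihalf ≤ A ∧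
      ∀ i, volume (K i) = ENNReal.ofReal A * VB := by
    rcases lt_or_eq_of_le h1 with hlt | heq
    · refine ⟨∫ t in (0:ℝ)..1, (min (Real.sqrt (1 - t ^ 2)) (t * Real.tan lam)) ^ (m + 1),
        key_integral m h0 hlt, fun i => ?_⟩
      simp only [hK]
      rw [cone_congr m (Real.cos lam) (v i) (hu i), cone_volume m h0 hlt]
    · have hc1 : c = 1 := by rw [hc, heq]; field_simp
      refine ⟨Ihalf, by rw [hc1, one_pow, one_mul], fun i => ?_⟩
      simp only [hK]
      rw [cone_congr m (Real.cos lam) (v i) (hu i)]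
      rw [show {x : EuclideanSpace ℝ (Fin (m + 2)) | ‖x‖ < 1 ∧ ‖x‖ * Real.cos lam < x 0}
          = {x : EuclideanSpace ℝ (Fin (m + 2)) | ‖x‖ < 1 ∧ 0 < x 0} by
        rw [heq]; simp [Real.cos_pi_div_two]]
      exact half_volume m
  have hA0 : 0 ≤ A := le_trans (by positivity) hAge
  have hmeasK : ∀ i, MeasurableSet (K i) := by
    intro i
    simp only [hK]
    rw [Set.setOf_and]
    exact ((isOpen_lt continuous_norm continuous_const).inter
      (isOpen_lt (continuous_norm.mul continuous_const)
        (Continuous.inner continuous_id continuous_const))).measurableSet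
  have hcount : ∀ s : Finset ι, (s.card : ℝ) ≤ 2 * (π / (2 * lam)) ^ (m + 1) := by
    intro s
    have hdisjS : (↑s : Set ι).PairwiseDisjoint K := fun i _ j _ hij =>
      cones_disjoint h0 h1 (hu i) (hu j) (ha i j hij)
    have hU : volume (⋃ i ∈ s, K i) = ∑ i ∈ s, volume (K i) :=
      measure_biUnion_finset hdisjS (fun i _ => hmeasK i)
    have hsub : (⋃ i ∈ s, K i) ⊆ Metric.ball (0 : EuclideanSpace ℝ (Fin (m + 2))) 1 := by
      intro x hx
      rw [mem_iUnion₂] at hx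
      obtain ⟨i, -, hxi⟩ := hx
      exact Metric.mem_ball.mpr (by simpa [dist_zero_right] using hxi.1)
    have hle : ∑ i ∈ s, volume (K i) ≤ volume (Metric.ball (0 : EuclideanSpace ℝ (Fin (m + 2))) 1) :=
      hU ▸ measure_mono hsub
    rw [Finset.sum_congr rfl (fun i _ => hAvol i), Finset.sum_const,
      ball_eq_two_half m, half_volume m] at hle
    rw [nsmul_eq_mul, ← mul_assoc, ← mul_assoc] at hle
    have hle2 : (s.card : ℝ≥0∞) * ENNReal.ofReal A ≤ 2 * ENNReal.ofReal Ihalf :=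
      (ENNReal.mul_le_mul_iff_left hVB0 hVBt).mp hle
    have hle3 : (s.card : ℝ) * A ≤ 2 * Ihalf := by
      have hfin : (2 : ℝ≥0∞) * ENNReal.ofReal Ihalf ≠ ⊤ := by
        exact ENNReal.mul_ne_top (by norm_num) ENNReal.ofReal_ne_top
      have := ENNReal.toReal_mono hfin hle2
      rwa [ENNReal.toReal_mul, ENNReal.toReal_mul, ENNReal.toReal_natCast,
        ENNReal.toReal_ofReal hA0, ENNReal.toReal_ofNat, ENNReal.toReal_ofReal hIpos.le] at this
    have hinv : π / (2 * lam) = c⁻¹ := by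
      rw [hc]; field_simp
    rw [hinv, inv_pow, ← div_eq_mul_inv, le_div_iff₀ (pow_pos hc0 _)]
    have hchain : (s.card : ℝ) * (c ^ (m + 1) * Ihalf) ≤ 2 * Ihalf :=
      le_trans (mul_le_mul_of_nonneg_left hAge (Nat.cast_nonneg s.card)) hle3
    exact le_of_mul_le_mul_right (by nlinarith [hchain]) hIpos
  have hfin : Finite ι := by
    by_contra hinf
    rw [not_finite_iff_infinite] at hinf
    obtain ⟨s, hs⟩ := Infinite.exists_subset_card_eq ι (⌊2 * (π / (2 * lam)) ^ (m + 1)⌋₊ + 1)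
    have h2 := hcount s
    rw [hs] at h2
    push_cast at h2
    have h3 := Nat.lt_floor_add_one (2 * (π / (2 * lam)) ^ (m + 1))
    linarith
  refine ⟨hfin, ?_⟩
  haveI := hfin
  haveI := Fintype.ofFinite ι
  rw [Nat.card_eq_fintype_card]
  exact hcount Finset.univ

end PackingAux

/-- If the initial vectors (in the unit sphere of `T_pM ≅ ℝⁿ`) of rays
representing distinct ends of a complete noncompact `M` have pairwise angle `≥ 2λ`
with `λ ∈ (0, π/2]`, then `M` has at most `2·(π/(2λ))^(n-1)` ends. -/
theorem stmt_12 (n : ℕ) (hn : 2 ≤ n) (lam : ℝ) (hlam0 : 0 < lam) (hlam : lam ≤ π / 2)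
    (M : Type*) [MetricSpace M] [ProperSpace M] (hnoncpt : ¬ CompactSpace M) (p : M)
    (v : Ends M → EuclideanSpace ℝ (Fin n))
    (hunit : ∀ e, ‖v e‖ = 1)
    (hangle : ∀ e e', e ≠ e' → 2 * lam ≤ angle (v e) (v e')) :
    Finite (Ends M) ∧ (Nat.card (Ends M) : ℝ) ≤ 2 * (π / (2 * lam)) ^ (n - 1) := by
  have hinner : ∀ e e', e ≠ e' → (inner ℝ (v e) (v e') : ℝ) ≤ Real.cos (2 * lam) := by
    intro e e' he
    have hang := hangle e e' he
    have hcos := Real.cos_le_cos_of_nonneg_of_le_pi (by linarith)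
      (InnerProductGeometry.angle_le_pi (v e) (v e')) hang
    have hca := InnerProductGeometry.cos_angle (v e) (v e')
    rw [hunit e, hunit e', mul_one, div_one] at hca
    rw [← hca]
    exact hcos
  exact packing hn hlam0 hlam v hunit hinner
end

section
/- Let a, b : [0,∞) → ℝ be continuous with a ≤ b ≤ 0, and let m_a, m_b be the solutions of x'' + a·x = 0 and x'' + b·x = 0 respectively, both with x(0)=0, x'(0)=1. Then m_a(t) ≥ m_b(t) ≥ t for all t ≥ 0. -/
open Set Filter Real Topology

/-- Passing to the limit `ε → 0` in `(1-ε) y ≤ x`. -/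
lemma stmt15_lim_aux (x y : ℝ) (hy : 0 ≤ y)
    (h : ∀ ε : ℝ, 0 < ε → ε ≤ 1 → (1 - ε) * y ≤ x) : y ≤ x := by
  refine le_of_forall_pos_le_add fun ε' hε' => ?_
  have hy1 : (0:ℝ) < y + 1 := by linarith
  have hε : 0 < min 1 (ε' / (y + 1)) := lt_min one_pos (div_pos hε' hy1)
  have h2 := h _ hε (min_le_left _ _)
  have h3 : min 1 (ε' / (y + 1)) ≤ ε' / (y + 1) := min_le_right _ _
  have h4 : min 1 (ε' / (y + 1)) * (y + 1) ≤ ε' := (le_div_iff₀ hy1).mp h3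
  nlinarith [hε.le]

/-- Key positivity lemma: if `w'' = c w + g` with `c, g ≥ 0` on `[0,∞)`,
`w 0 = 0` and `w' 0 = ε > 0`, then `w ≥ 0` on `[0,∞)`. -/
lemma stmt15_aux (c g w w' w'' : ℝ → ℝ) (ε : ℝ) (hε : 0 < ε)
    (hc : ∀ t ∈ Ici (0:ℝ), 0 ≤ c t) (hg : ∀ t ∈ Ici (0:ℝ), 0 ≤ g t)
    (hw : ∀ t ∈ Ici (0:ℝ), HasDerivWithinAt w (w' t) (Ici 0) t)
    (hw' : ∀ t ∈ Ici (0:ℝ), HasDerivWithinAt w' (w'' t) (Ici 0) t)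
    (hode : ∀ t ∈ Ici (0:ℝ), w'' t = c t * w t + g t)
    (h0 : w 0 = 0) (h0' : w' 0 = ε) :
    ∀ t ∈ Ici (0:ℝ), 0 ≤ w t := by
  by_contra hcon
  push_neg at hcon
  obtain ⟨t1, ht1, hwt1⟩ := hcon
  -- near 0, w is positive
  have hd0 : HasDerivWithinAt w ε (Ici 0) 0 := h0' ▸ hw 0 self_mem_Ici
  have hslope : Tendsto (slope w 0) (𝓝[Ici 0 \ {0}] 0) (𝓝 ε) :=
    hasDerivWithinAt_iff_tendsto_slope.mp hd0
  have hev : ∀ᶠ t in 𝓝[Ici 0 \ {0}] 0, 0 < slope w 0 t :=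
    hslope.eventually (eventually_gt_nhds hε)
  rw [eventually_nhdsWithin_iff, Metric.eventually_nhds_iff] at hev
  obtain ⟨δ, hδ, hball⟩ := hev
  have hpos : ∀ t : ℝ, 0 < t → t < δ → 0 < w t := by
    intro t ht htδ
    have hdist : dist t 0 < δ := by
      rw [Real.dist_eq, sub_zero, abs_of_pos ht]; exact htδ
    have hmem : t ∈ Ici (0:ℝ) \ {0} := ⟨ht.le, by simp [ne_of_gt ht]⟩
    have hs := hball hdist hmem
    rw [slope_def_field, h0, sub_zero, sub_zero] at hs
    exact (div_pos_iff.mp hs).resolve_right (fun h => absurd h.2 (not_lt.mpr ht.le)) |>.1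
  -- the set of nonpositive points
  set S : Set ℝ := {t | t ∈ Icc 0 t1 ∧ w t < 0} with hSdef
  have hne : S.Nonempty := ⟨t1, ⟨ht1, le_refl _⟩, hwt1⟩
  have hbdd : BddBelow S := ⟨0, fun t ht => ht.1.1⟩
  set t0 := sInf S with ht0def
  have hSδ : ∀ t ∈ S, δ ≤ t := by
    rintro t ⟨⟨ht0', _⟩, hwt⟩
    by_contra hlt
    push_neg at hlt
    rcases eq_or_lt_of_le ht0' with h | h
    · rw [← h, h0] at hwt; exact lt_irrefl 0 hwt
    · exact absurd (hpos t h hlt) (not_lt.mpr hwt.le)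
  have hδt0 : δ ≤ t0 := le_csInf hne hSδ
  have ht0pos : 0 < t0 := lt_of_lt_of_le hδ hδt0
  have ht0le : t0 ≤ t1 := csInf_le hbdd ⟨⟨ht1, le_refl _⟩, hwt1⟩
  have hnonneg : ∀ t : ℝ, 0 ≤ t → t < t0 → 0 ≤ w t := by
    intro t ht htlt
    by_contra hneg
    push_neg at hneg
    exact absurd (csInf_le hbdd ⟨⟨ht, by linarith⟩, hneg⟩) (not_le.mpr htlt)
  -- w t0 ≤ 0 by closedness
  have hwcont : ContinuousOn w (Ici 0) := fun t ht => (hw t ht).continuousWithinAt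
  have hclosed : IsClosed (Ici (0:ℝ) ∩ w ⁻¹' (Iic 0)) :=
    hwcont.preimage_isClosed_of_isClosed isClosed_Ici isClosed_Iic
  have ht0C : t0 ∈ Ici (0:ℝ) ∩ w ⁻¹' (Iic 0) := by
    have hsub : S ⊆ Ici (0:ℝ) ∩ w ⁻¹' (Iic 0) := fun t ht => ⟨ht.1.1, ht.2.le⟩
    have := csInf_mem_closure hne hbdd
    exact hclosed.closure_subset ((closure_mono hsub) this)
  have hwt0 : w t0 ≤ 0 := ht0C.2
  -- w' is monotone on [0, t0]
  have hIcc : Icc (0:ℝ) t0 ⊆ Ici 0 := Icc_subset_Ici_self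
  have hmono : MonotoneOn w' (Icc 0 t0) := by
    apply monotoneOn_of_deriv_nonneg (convex_Icc 0 t0)
    · have : ContinuousOn w' (Ici 0) := fun t ht => (hw' t ht).continuousWithinAt
      exact this.mono hIcc
    · rw [interior_Icc]
      intro x hx
      exact ((hw' x (le_of_lt hx.1)).hasDerivAt (Ici_mem_nhds hx.1)).differentiableAt.differentiableWithinAt
    · rw [interior_Icc]
      intro x hx
      have hxI : x ∈ Ici (0:ℝ) := le_of_lt hx.1
      have hda : HasDerivAt w' (w'' x) x := (hw' x hxI).hasDerivAt (Ici_mem_nhds hx.1)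
      rw [hda.deriv, hode x hxI]
      have := hnonneg x hx.1.le hx.2
      have := hc x hxI
      have := hg x hxI
      nlinarith
  have hw'ge : ∀ t ∈ Icc (0:ℝ) t0, ε ≤ w' t := by
    intro t ht
    have := hmono (left_mem_Icc.mpr ht0pos.le) ht ht.1
    rwa [h0'] at this
  -- hence w t0 ≥ ε t0 > 0 : contradiction
  have hmono2 : MonotoneOn (fun t => w t - ε * t) (Icc 0 t0) := by
    apply monotoneOn_of_deriv_nonneg (convex_Icc 0 t0)
    · exact (hwcont.mono hIcc).sub ((continuous_const.mul continuous_id).continuousOn)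
    · rw [interior_Icc]
      intro x hx
      have hda : HasDerivAt (fun t => w t - ε * t) (w' x - ε) x := by
        have h1 : HasDerivAt w (w' x) x := (hw x (le_of_lt hx.1)).hasDerivAt (Ici_mem_nhds hx.1)
        exact (h1.sub ((hasDerivAt_id x).const_mul ε)).congr_deriv (by ring)
      exact hda.differentiableAt.differentiableWithinAt
    · rw [interior_Icc]
      intro x hx
      have hda : HasDerivAt (fun t => w t - ε * t) (w' x - ε) x := by
        have h1 : HasDerivAt w (w' x) x := (hw x (le_of_lt hx.1)).hasDerivAt (Ici_mem_nhds hx.1)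
        exact (h1.sub ((hasDerivAt_id x).const_mul ε)).congr_deriv (by ring)
      rw [hda.deriv]
      have := hw'ge x ⟨hx.1.le, hx.2.le⟩
      linarith
  have hfinal := hmono2 (left_mem_Icc.mpr ht0pos.le) (right_mem_Icc.mpr ht0pos.le) ht0pos.le
  simp only [h0] at hfinal
  nlinarith

/-- Sturm-type comparison: if `a ≤ b ≤ 0` are continuous and `m_a`, `m_b`
solve `x'' + a x = 0`, `x'' + b x = 0` with `x 0 = 0`, `x' 0 = 1`, then
`m_a t ≥ m_b t ≥ t` for all `t ≥ 0`. -/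
theorem stmt_15 (a b ma ma' ma'' mb mb' mb'' : ℝ → ℝ)
    (hacont : ContinuousOn a (Ici 0)) (hbcont : ContinuousOn b (Ici 0))
    (hab : ∀ t ∈ Ici (0:ℝ), a t ≤ b t) (hb0 : ∀ t ∈ Ici (0:ℝ), b t ≤ 0)
    (hma : ∀ t ∈ Ici (0:ℝ), HasDerivWithinAt ma (ma' t) (Ici 0) t)
    (hma' : ∀ t ∈ Ici (0:ℝ), HasDerivWithinAt ma' (ma'' t) (Ici 0) t)
    (hma''cont : ContinuousOn ma'' (Ici 0))
    (hodea : ∀ t ∈ Ici (0:ℝ), ma'' t + a t * ma t = 0)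
    (hma0 : ma 0 = 0) (hma'0 : ma' 0 = 1)
    (hmb : ∀ t ∈ Ici (0:ℝ), HasDerivWithinAt mb (mb' t) (Ici 0) t)
    (hmb' : ∀ t ∈ Ici (0:ℝ), HasDerivWithinAt mb' (mb'' t) (Ici 0) t)
    (hmb''cont : ContinuousOn mb'' (Ici 0))
    (hodeb : ∀ t ∈ Ici (0:ℝ), mb'' t + b t * mb t = 0)
    (hmb0 : mb 0 = 0) (hmb'0 : mb' 0 = 1) :
    ∀ t ∈ Ici (0:ℝ), t ≤ mb t ∧ mb t ≤ ma t := by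
  -- Step 1: mb t ≥ (1-ε) t for all small ε
  have step1 : ∀ ε : ℝ, 0 < ε → ε ≤ 1 → ∀ t ∈ Ici (0:ℝ), 0 ≤ mb t - (1 - ε) * t := by
    intro ε hε hε1
    apply stmt15_aux (fun t => -b t) (fun t => (1 - ε) * (-b t) * t)
      (fun t => mb t - (1 - ε) * t) (fun t => mb' t - (1 - ε)) mb'' ε hε
    · intro t ht; have := hb0 t ht; linarith
    · intro t ht
      have hbt := hb0 t ht
      have : (0:ℝ) ≤ 1 - ε := by linarith
      have h1 : 0 ≤ (1 - ε) * (-b t) := mul_nonneg this (by linarith)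
      exact mul_nonneg h1 ht
    · intro t ht
      have h1 : HasDerivWithinAt (fun t => (1 - ε) * t) ((1 - ε) * 1) (Ici 0) t :=
        (hasDerivWithinAt_id t (Ici 0)).const_mul (1 - ε)
      exact ((hmb t ht).sub h1).congr_deriv (by ring)
    · intro t ht
      simpa using (hmb' t ht).sub_const (1 - ε)
    · intro t ht
      have := hodeb t ht
      ring_nf
      ring_nf at this
      linarith
    · simp [hmb0]
    · simp [hmb'0]
  have hmbge : ∀ t ∈ Ici (0:ℝ), t ≤ mb t := by
    intro t ht
    apply stmt15_lim_aux (mb t) t ht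
    intro ε hε hε1
    have := step1 ε hε hε1 t ht
    linarith
  have hmbnn : ∀ t ∈ Ici (0:ℝ), 0 ≤ mb t := fun t ht => le_trans ht (hmbge t ht)
  -- Step 2: ma t ≥ (1-ε) mb t for all small ε
  have step2 : ∀ ε : ℝ, 0 < ε → ε ≤ 1 → ∀ t ∈ Ici (0:ℝ), 0 ≤ ma t - (1 - ε) * mb t := by
    intro ε hε hε1
    apply stmt15_aux (fun t => -a t) (fun t => (1 - ε) * (b t - a t) * mb t)
      (fun t => ma t - (1 - ε) * mb t) (fun t => ma' t - (1 - ε) * mb' t)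
      (fun t => ma'' t - (1 - ε) * mb'' t) ε hε
    · intro t ht
      have := hab t ht; have := hb0 t ht; linarith
    · intro t ht
      have h1 : (0:ℝ) ≤ 1 - ε := by linarith
      have h2 : 0 ≤ b t - a t := by have := hab t ht; linarith
      exact mul_nonneg (mul_nonneg h1 h2) (hmbnn t ht)
    · intro t ht
      exact (hma t ht).sub ((hmb t ht).const_mul (1 - ε))
    · intro t ht
      exact (hma' t ht).sub ((hmb' t ht).const_mul (1 - ε))
    · intro t ht
      have h1 := hodea t ht
      have h2 := hodeb t ht
      ring_nf
      ring_nf at h1 h2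
      nlinarith [h1, h2]
    · simp [hma0, hmb0]
    · simp [hma'0, hmb'0]
  have hmage : ∀ t ∈ Ici (0:ℝ), mb t ≤ ma t := by
    intro t ht
    apply stmt15_lim_aux (ma t) (mb t) (hmbnn t ht)
    intro ε hε hε1
    have := step2 ε hε hε1 t ht
    linarith
  exact fun t ht => ⟨hmbge t ht, hmage t ht⟩
end
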